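/- arXiv:2205.06846 — 9 statements merged into one kernel-verified Lean document; each statement's English description precedes it below -/
import Mathlib

section
/- For all real x ≥ 0, |x - 1| · log(1 + |x - 1|) ≤ 2(1 - x + x·log x), where x·log x is interpreted as 0 at x = 0. -/
open Real Set

private lemma aux_logA (y : ℝ) (hy : 1 ≤ y) : Real.log y ≤ (y - 1/y)/2 := by
  set f : ℝ → ℝ := fun t => (t - t⁻¹)/2 - Real.log t with hf
  have key : MonotoneOn f (Set.Ici 1) := by
    apply monotoneOn_of_deriv_nonneg (convex_Ici 1)
    · apply ContinuousOn.sub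
      · exact (continuousOn_id.sub (continuousOn_id.inv₀ (fun t ht =>
          by exact ne_of_gt (lt_of_lt_of_le one_pos ht)))).div_const 2
      · exact Real.continuousOn_log.mono (fun t ht => by
          simp only [mem_compl_iff, mem_singleton_iff]
          exact ne_of_gt (lt_of_lt_of_le one_pos ht))
    · intro t ht
      simp only [interior_Ici, mem_Ioi] at ht
      have ht0 : t ≠ 0 := ne_of_gt (lt_trans one_pos ht)
      exact (((hasDerivAt_id t).sub (hasDerivAt_inv ht0)).div_const 2 |>.sub
        (Real.hasDerivAt_log ht0)).differentiableAt.differentiableWithinAt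
    · intro t ht
      simp only [interior_Ici, mem_Ioi] at ht
      have ht0 : (0:ℝ) < t := lt_trans one_pos ht
      have hd : HasDerivAt f ((1 - -(t^2)⁻¹)/2 - t⁻¹) t :=
        ((hasDerivAt_id t).sub (hasDerivAt_inv (ne_of_gt ht0))).div_const 2 |>.sub
          (Real.hasDerivAt_log (ne_of_gt ht0))
      rw [hd.deriv]
      have e : (1 - -(t^2)⁻¹)/2 - t⁻¹ = (t-1)^2/(2*t^2) := by
        field_simp; ring
      rw [e]; positivity
  have h := key self_mem_Ici (mem_Ici.mpr hy) hy
  simp only [hf, Real.log_one] at h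
  norm_num at h
  have : Real.log y ≤ (y - y⁻¹)/2 := by linarith
  rw [one_div]; linarith

private lemma aux_logB (y : ℝ) (hy : 1 ≤ y) : 2*(y-1)/(y+1) ≤ Real.log y := by
  set g : ℝ → ℝ := fun t => Real.log t - 2*(t-1)/(t+1) with hg
  have key : MonotoneOn g (Set.Ici 1) := by
    apply monotoneOn_of_deriv_nonneg (convex_Ici 1)
    · apply ContinuousOn.sub
      · exact Real.continuousOn_log.mono (fun t ht => by
          simp only [mem_compl_iff, mem_singleton_iff]
          exact ne_of_gt (lt_of_lt_of_le one_pos ht))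
      · exact ContinuousOn.div (by fun_prop) (by fun_prop)
          (fun t ht => by nlinarith [(mem_Ici.mp ht)])
    · intro t ht
      simp only [interior_Ici, mem_Ioi] at ht
      have ht0 : (0:ℝ) < t := lt_trans one_pos ht
      have ht1 : t + 1 ≠ 0 := by positivity
      exact ((Real.hasDerivAt_log (ne_of_gt ht0)).sub
        ((((hasDerivAt_id t).sub_const 1).const_mul 2).div
        ((hasDerivAt_id t).add_const 1) ht1)).differentiableAt.differentiableWithinAt
    · intro t ht
      simp only [interior_Ici, mem_Ioi] at ht
      have ht0 : (0:ℝ) < t := lt_trans one_pos ht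
      have ht1 : (0:ℝ) < t + 1 := by positivity
      have hd : HasDerivAt g (t⁻¹ - (2*1*(t+1) - 2*(t-1)*1)/(t+1)^2) t :=
        (Real.hasDerivAt_log (ne_of_gt ht0)).sub
          ((((hasDerivAt_id t).sub_const 1).const_mul 2).div
          ((hasDerivAt_id t).add_const 1) (ne_of_gt ht1))
      rw [hd.deriv]
      have e : t⁻¹ - (2*1*(t+1) - 2*(t-1)*1)/(t+1)^2 = (t-1)^2/(t*(t+1)^2) := by
        field_simp; ring
      rw [e]; positivity
  have h := key self_mem_Ici (mem_Ici.mpr hy) hy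
  simp only [hg, Real.log_one] at h
  norm_num at h
  linarith

/-- For all real `x ≥ 0`, `|x - 1| * log (1 + |x - 1|) ≤ 2 * (1 - x + x * log x)`.
Note `Real.log 0 = 0`, so `x * log x` is `0` at `x = 0`. -/
theorem f_div_generator_le (x : ℝ) (hx : 0 ≤ x) :
    |x - 1| * Real.log (1 + |x - 1|) ≤ 2 * (1 - x + x * Real.log x) := by
  rcases le_or_gt 1 x with h1 | h1
  · -- x ≥ 1
    have habs : |x - 1| = x - 1 := abs_of_nonneg (by linarith)
    rw [habs]
    have hx1 : (1:ℝ) + (x - 1) = x := by ring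
    rw [hx1]
    have hB := aux_logB x h1
    have hlog0 : 0 ≤ Real.log x := Real.log_nonneg h1
    have hx1' : (0:ℝ) < x + 1 := by linarith
    rw [div_le_iff₀ hx1'] at hB
    nlinarith
  · -- 0 ≤ x < 1
    have habs : |x - 1| = 1 - x := by rw [abs_of_nonpos (by linarith : x - 1 ≤ 0)]; ring
    rw [habs]
    rcases eq_or_lt_of_le hx with h0 | h0
    · rw [← h0]
      norm_num
      have : Real.log 2 ≤ 1 := by
        have := Real.log_le_sub_one_of_pos (by norm_num : (0:ℝ) < 2)
        linarith
      linarith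
    · have hx1 : (1:ℝ) + (1 - x) = 2 - x := by ring
      rw [hx1]
      have hlog : Real.log (2 - x) ≤ 1 - x := by
        have := Real.log_le_sub_one_of_pos (by linarith : (0:ℝ) < 2 - x)
        linarith
      have hA := aux_logA (1/x) (by rw [le_div_iff₀ h0]; linarith)
      rw [Real.log_div one_ne_zero (ne_of_gt h0), Real.log_one] at hA
      have hxlog : (x^2 - 1)/2 ≤ x * Real.log x := by
        have h1x : (1:ℝ)/(1/x) = x := by field_simp
        rw [h1x] at hA
        have : (x - 1/x)/2 ≤ Real.log x := by linarith
        have h2 : x * ((x - 1/x)/2) ≤ x * Real.log x :=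
          mul_le_mul_of_nonneg_left this (le_of_lt h0)
        have h3 : x * ((x - 1/x)/2) = (x^2 - 1)/2 := by field_simp
        linarith
      have hL : (1 - x) * Real.log (2 - x) ≤ (1 - x) * (1 - x) :=
        mul_le_mul_of_nonneg_left hlog (by linarith)
      nlinarith
end

section
/- For all real x ≥ 0, the inverse of the function erfi(z) = ∫₀^z exp(t²) dt satisfies erfi⁻¹(x) ≤ 1 + √(log(1 + x)). -/
/-- The inverse of `erfi z = ∫₀^z exp(t²) dt` satisfies `erfi⁻¹ x ≤ 1 + √(log (1 + x))`
for all `x ≥ 0`: if `z ≥ 0` and `erfi z = x`, then `z ≤ 1 + √(log (1 + x))`. -/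
theorem erfi_inv_le (x z : ℝ) (hx : 0 ≤ x) (hz : 0 ≤ z)
    (h : (∫ t in (0:ℝ)..z, Real.exp (t ^ 2)) = x) :
    z ≤ 1 + Real.sqrt (Real.log (1 + x)) := by
  rcases le_or_gt z 1 with hz1 | hz1
  · have : 0 ≤ Real.sqrt (Real.log (1 + x)) := Real.sqrt_nonneg _
    linarith
  · -- z > 1
    have hcont : Continuous fun t : ℝ => Real.exp (t ^ 2) := by continuity
    have hint : ∀ a b : ℝ, IntervalIntegrable (fun t => Real.exp (t ^ 2)) MeasureTheory.volume a b :=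
      fun a b => hcont.intervalIntegrable a b
    have hsplit : (∫ t in (0:ℝ)..(z-1), Real.exp (t ^ 2)) +
        (∫ t in (z-1)..z, Real.exp (t ^ 2)) = ∫ t in (0:ℝ)..z, Real.exp (t ^ 2) :=
      intervalIntegral.integral_add_adjacent_intervals (hint _ _) (hint _ _)
    have h1 : 0 ≤ ∫ t in (0:ℝ)..(z-1), Real.exp (t ^ 2) := by
      apply intervalIntegral.integral_nonneg (by linarith)
      intro u _; exact (Real.exp_pos _).le
    have h2 : Real.exp ((z-1) ^ 2) ≤ ∫ t in (z-1)..z, Real.exp (t ^ 2) := by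
      have : (∫ t in (z-1)..z, Real.exp ((z-1) ^ 2)) ≤
          ∫ t in (z-1)..z, Real.exp (t ^ 2) := by
        apply intervalIntegral.integral_mono_on (by linarith) (by simp) (hint _ _)
        intro u hu
        apply Real.exp_le_exp.2
        have h01 : 0 ≤ z - 1 := by linarith
        have := hu.1
        have := hu.2
        nlinarith [hu.1, hu.2]
      simpa using this
    have hle : Real.exp ((z-1) ^ 2) ≤ 1 + x := by
      have : Real.exp ((z-1) ^ 2) ≤ x := by
        rw [← h, ← hsplit]; linarith
      linarith
    have hlog : (z-1) ^ 2 ≤ Real.log (1 + x) := by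
      rw [Real.le_log_iff_exp_le (by linarith)]
      exact hle
    have : z - 1 ≤ Real.sqrt (Real.log (1 + x)) := by
      calc z - 1 = Real.sqrt ((z-1)^2) := by
            rw [Real.sqrt_sq (by linarith)]
        _ ≤ Real.sqrt (Real.log (1 + x)) := Real.sqrt_le_sqrt hlog
    linarith
end

section
/- Let α > 0, C > 0 and V_α(t,S) = C√(αt)·[2∫₀^{S/√(4αt)} (∫₀^u exp(x²) dx) du - 1]. Then V_α satisfies the backward heat equation ∂_t V_α + α·∂_{SS} V_α = 0 for all t > 0 and S ∈ ℝ. -/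
/-- The switching-adjusted potential
`V_α(t,S) = C √(αt) [2 ∫₀^{S/√(4αt)} (∫₀^u exp(x²) dx) du - 1]`. -/
noncomputable def Vpot (C α t S : ℝ) : ℝ :=
  C * Real.sqrt (α * t) *
    (2 * (∫ u in (0:ℝ)..(S / Real.sqrt (4 * α * t)),
        ∫ x in (0:ℝ)..u, Real.exp (x ^ 2)) - 1)

noncomputable def Gf (u : ℝ) : ℝ := ∫ x in (0:ℝ)..u, Real.exp (x ^ 2)

noncomputable def Ff (y : ℝ) : ℝ := ∫ u in (0:ℝ)..y, Gf u

lemma continuous_exp_sq : Continuous fun x : ℝ => Real.exp (x ^ 2) := by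
  continuity

lemma hasDerivAt_Gf (u : ℝ) : HasDerivAt Gf (Real.exp (u ^ 2)) u :=
  (continuous_exp_sq.integral_hasStrictDerivAt 0 u).hasDerivAt

lemma continuous_Gf : Continuous Gf :=
  Differentiable.continuous (fun u => (hasDerivAt_Gf u).differentiableAt)

lemma hasDerivAt_Ff (y : ℝ) : HasDerivAt Ff (Gf y) y :=
  (continuous_Gf.integral_hasStrictDerivAt 0 y).hasDerivAt

lemma Ff_eq (y : ℝ) : Ff y = y * Gf y - (Real.exp (y ^ 2) - 1) / 2 := by
  have h : ∀ u ∈ Set.uIcc (0:ℝ) y,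
      HasDerivAt (fun v => v * Gf v - (Real.exp (v ^ 2) - 1) / 2) (Gf u) u := by
    intro u _
    have h1 : HasDerivAt (fun v : ℝ => v * Gf v) (1 * Gf u + u * Real.exp (u ^ 2)) u :=
      (hasDerivAt_id u).mul (hasDerivAt_Gf u)
    have h2 : HasDerivAt (fun v : ℝ => Real.exp (v ^ 2))
        (Real.exp (u ^ 2) * (2 * u ^ 1)) u :=
      (hasDerivAt_pow 2 u).exp
    have := h1.sub (((h2.sub_const 1).div_const 2))
    refine this.congr_deriv ?_
    ring
  have := intervalIntegral.integral_eq_sub_of_hasDerivAt h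
    (continuous_Gf.intervalIntegrable 0 y)
  rw [Ff, this]
  simp [Gf]

lemma Vpot_eq (C α t S : ℝ) :
    Vpot C α t S =
      C * Real.sqrt (α * t) * (2 * Ff (S / Real.sqrt (4 * α * t)) - 1) := rfl

lemma sqrt4 (α t : ℝ) (hα : 0 < α) (ht : 0 < t) :
    Real.sqrt (4 * α * t) = 2 * Real.sqrt (α * t) := by
  rw [mul_assoc, show (4:ℝ) = 2 ^ 2 by norm_num, Real.sqrt_mul (by positivity),
    Real.sqrt_sq (by norm_num)]

/-- First spatial derivative. -/
lemma spatial1 (C α t : ℝ) (hα : 0 < α) (ht : 0 < t) (s : ℝ) :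
    HasDerivAt (fun s' => Vpot C α t s')
      (C * Real.sqrt (α * t) *
        (2 * (Gf (s / Real.sqrt (4 * α * t)) * (1 / Real.sqrt (4 * α * t))))) s := by
  have hdiv : HasDerivAt (fun s' : ℝ => s' / Real.sqrt (4 * α * t))
      (1 / Real.sqrt (4 * α * t)) s := by
    simpa using (hasDerivAt_id s).div_const (Real.sqrt (4 * α * t))
  have hF : HasDerivAt (fun s' : ℝ => Ff (s' / Real.sqrt (4 * α * t)))
      (Gf (s / Real.sqrt (4 * α * t)) * (1 / Real.sqrt (4 * α * t))) s :=
    (hasDerivAt_Ff _).comp s hdiv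
  simp only [Vpot_eq]
  exact ((hF.const_mul 2).sub_const 1).const_mul (C * Real.sqrt (α * t))

/-- Second spatial derivative. -/
lemma spatial2 (C α t : ℝ) (hα : 0 < α) (ht : 0 < t) (S : ℝ) :
    deriv (fun s => deriv (fun s' => Vpot C α t s') s) S =
      C * Real.sqrt (α * t) *
        (2 * (Real.exp ((S / Real.sqrt (4 * α * t)) ^ 2) *
          (1 / Real.sqrt (4 * α * t)) * (1 / Real.sqrt (4 * α * t)))) := by
  have hrew : (fun s => deriv (fun s' => Vpot C α t s') s) =
      fun s => C * Real.sqrt (α * t) *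
        (2 * (Gf (s / Real.sqrt (4 * α * t)) * (1 / Real.sqrt (4 * α * t)))) := by
    funext s
    exact (spatial1 C α t hα ht s).deriv
  rw [hrew]
  have hdiv : HasDerivAt (fun s' : ℝ => s' / Real.sqrt (4 * α * t))
      (1 / Real.sqrt (4 * α * t)) S := by
    simpa using (hasDerivAt_id S).div_const (Real.sqrt (4 * α * t))
  have hG : HasDerivAt (fun s : ℝ => Gf (s / Real.sqrt (4 * α * t)))
      (Real.exp ((S / Real.sqrt (4 * α * t)) ^ 2) * (1 / Real.sqrt (4 * α * t))) S :=
    (hasDerivAt_Gf _).comp S hdiv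
  have := ((hG.mul_const (1 / Real.sqrt (4 * α * t))).const_mul 2).const_mul
    (C * Real.sqrt (α * t))
  rw [this.deriv]

/-- Time derivative. -/
lemma timederiv (C α : ℝ) (hα : 0 < α) (t S : ℝ) (ht : 0 < t) :
    HasDerivAt (fun τ => Vpot C α τ S)
      (C * (1 / (2 * Real.sqrt (α * t)) * α) * (2 * Ff (S / Real.sqrt (4 * α * t)) - 1)
        + C * Real.sqrt (α * t) *
          (2 * (Gf (S / Real.sqrt (4 * α * t)) *
            ((0 * Real.sqrt (4 * α * t) - S * (1 / (2 * Real.sqrt (4 * α * t)) * (4 * α)))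
              / Real.sqrt (4 * α * t) ^ 2)))) t := by
  have hαt : α * t ≠ 0 := by positivity
  have h4αt : (4 : ℝ) * α * t ≠ 0 := by positivity
  have hd : Real.sqrt (4 * α * t) ≠ 0 := by positivity
  have hsqrt : HasDerivAt (fun τ : ℝ => Real.sqrt (α * τ))
      (1 / (2 * Real.sqrt (α * t)) * α) t := by
    have hlin : HasDerivAt (fun τ : ℝ => α * τ) α t := by
      simpa using (hasDerivAt_id t).const_mul α
    exact (Real.hasDerivAt_sqrt hαt).comp t hlin
  have hsqrt4 : HasDerivAt (fun τ : ℝ => Real.sqrt (4 * α * τ))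
      (1 / (2 * Real.sqrt (4 * α * t)) * (4 * α)) t := by
    have hlin : HasDerivAt (fun τ : ℝ => 4 * α * τ) (4 * α) t := by
      simpa using (hasDerivAt_id t).const_mul (4 * α)
    exact (Real.hasDerivAt_sqrt h4αt).comp t hlin
  have hinner : HasDerivAt (fun τ : ℝ => S / Real.sqrt (4 * α * τ))
      ((0 * Real.sqrt (4 * α * t) - S * (1 / (2 * Real.sqrt (4 * α * t)) * (4 * α)))
        / Real.sqrt (4 * α * t) ^ 2) t :=
    (hasDerivAt_const t S).div hsqrt4 hd
  have hF : HasDerivAt (fun τ : ℝ => Ff (S / Real.sqrt (4 * α * τ)))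
      (Gf (S / Real.sqrt (4 * α * t)) *
        ((0 * Real.sqrt (4 * α * t) - S * (1 / (2 * Real.sqrt (4 * α * t)) * (4 * α)))
          / Real.sqrt (4 * α * t) ^ 2)) t :=
    (hasDerivAt_Ff _).comp t hinner
  simp only [Vpot_eq]
  exact (hsqrt.const_mul C).mul ((hF.const_mul 2).sub_const 1)

/-- `V_α` satisfies the backward heat equation `∂_t V_α + α ∂_{SS} V_α = 0` for `t > 0`. -/
theorem Vpot_backward_heat (C α : ℝ) (hC : 0 < C) (hα : 0 < α) (t S : ℝ) (ht : 0 < t) :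
    deriv (fun τ => Vpot C α τ S) t
      + α * deriv (fun s => deriv (fun s' => Vpot C α t s') s) S = 0 := by
  rw [(timederiv C α hα t S ht).deriv, spatial2 C α t hα ht S]
  have hr : (0:ℝ) < Real.sqrt (α * t) := Real.sqrt_pos.2 (by positivity)
  have hr2 : Real.sqrt (α * t) ^ 2 = α * t := Real.sq_sqrt (by positivity)
  rw [sqrt4 α t hα ht, Ff_eq]
  set r := Real.sqrt (α * t) with hrdef
  have hS : S / (2 * r) * (2 * r) = S := by
    field_simp
  have hy2 : Real.exp ((S / (2 * r)) ^ 2) * (S / (2 * r)) * (2 * r)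
      = Real.exp ((S / (2 * r)) ^ 2) * S := by
    rw [mul_assoc, hS]
  field_simp
  ring_nf
end

section
/- Let α ≥ 2 and consider h(t,S) = (λ/G)·exp(1/(αt))·cosh(S/(αt)) + exp(1/(4αt))·cosh(S/(2αt)) - λ/G - √(t/(t-1))·exp(S²/(4αt(t-1))) for integers t ≥ 2 and real S ≥ 0, with λ ≥ 0, G > 0, and α ≥ 4λ/G + 2. Then h(t,S) ≤ 0 for all t ≥ 2 and S ≥ 0. -/
/-- Elementary step: if `0 ≤ L`, `x2 ≤ x1`, `(L+1) x1 ≤ E`, then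
`L e^{x1} + e^{x2} - L - e^{E} ≤ 0`. -/
lemma residual_step_aux (L x1 x2 E : ℝ) (hL : 0 ≤ L) (h21 : x2 ≤ x1)
    (h1E : (L + 1) * x1 ≤ E) :
    L * Real.exp x1 + Real.exp x2 - L - Real.exp E ≤ 0 := by
  have hx1 : (0:ℝ) < Real.exp x1 := Real.exp_pos _
  -- e^{x1} - 1 ≤ x1 e^{x1}
  have A : Real.exp x1 - 1 ≤ x1 * Real.exp x1 := by
    have h := Real.add_one_le_exp (-x1)
    have := mul_le_mul_of_nonneg_left h hx1.le
    rw [← Real.exp_add] at this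
    simp at this
    nlinarith
  -- e^{E} - e^{x1} ≥ e^{x1} (E - x1)
  have B : Real.exp x1 * (E - x1) ≤ Real.exp E - Real.exp x1 := by
    have h := Real.add_one_le_exp (E - x1)
    have := mul_le_mul_of_nonneg_left h hx1.le
    rw [← Real.exp_add] at this
    have hE : x1 + (E - x1) = E := by ring
    rw [hE] at this
    nlinarith
  have C : Real.exp x2 ≤ Real.exp x1 := Real.exp_le_exp.mpr h21
  have D : L * x1 ≤ E - x1 := by nlinarith
  nlinarith [mul_le_mul_of_nonneg_left A hL,
    mul_le_mul_of_nonneg_left D hx1.le]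

/-- The key analytic inequality: for `λ ≥ 0`, `G > 0`, `α ≥ 2` with `α ≥ 4λ/G + 2`,
integer `t ≥ 2` and real `S ≥ 0`,
`(λ/G) exp(1/(αt)) cosh(S/(αt)) + exp(1/(4αt)) cosh(S/(2αt)) - λ/G
  - √(t/(t-1)) exp(S²/(4αt(t-1))) ≤ 0`. -/
theorem residual_h_nonpos (lam G α : ℝ) (hlam : 0 ≤ lam) (hG : 0 < G)
    (hα2 : 2 ≤ α) (hα : 4 * lam / G + 2 ≤ α)
    (t : ℕ) (ht : 2 ≤ t) (S : ℝ) (hS : 0 ≤ S) :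
    lam / G * Real.exp (1 / (α * t)) * Real.cosh (S / (α * t))
      + Real.exp (1 / (4 * α * t)) * Real.cosh (S / (2 * α * t))
      - lam / G
      - Real.sqrt ((t : ℝ) / ((t : ℝ) - 1)) * Real.exp (S ^ 2 / (4 * α * t * ((t : ℝ) - 1)))
      ≤ 0 := by
  set T : ℝ := (t : ℝ) with hTdef
  have hT2 : (2:ℝ) ≤ T := by rw [hTdef]; exact_mod_cast ht
  have hTpos : (0:ℝ) < T := by linarith
  have hT1 : (0:ℝ) < T - 1 := by linarith
  have hαpos : (0:ℝ) < α := by linarith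
  have ha : (0:ℝ) < α * T := by positivity
  set L : ℝ := lam / G with hLdef
  have hL0 : (0:ℝ) ≤ L := div_nonneg hlam hG.le
  have hL4 : 4 * L + 2 ≤ α := by
    rw [hLdef, ← mul_div_assoc]; exact hα
  set x1 : ℝ := 1 / (α * T) + (S / (α * T)) ^ 2 / 2 with hx1def
  set x2 : ℝ := 1 / (4 * α * T) + (S / (2 * α * T)) ^ 2 / 2 with hx2def
  set E : ℝ := 1 / (2 * T) + S ^ 2 / (4 * α * T * (T - 1)) with hEdef
  -- bound the first term
  have b1 : L * Real.exp (1 / (α * T)) * Real.cosh (S / (α * T)) ≤ L * Real.exp x1 := by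
    rw [hx1def, Real.exp_add, ← mul_assoc]
    gcongr
    exact Real.cosh_le_exp_half_sq _
  -- bound the second term
  have b2 : Real.exp (1 / (4 * α * T)) * Real.cosh (S / (2 * α * T)) ≤ Real.exp x2 := by
    rw [hx2def, Real.exp_add]
    gcongr
    exact Real.cosh_le_exp_half_sq _
  -- bound the last term from below
  have b3 : Real.exp E ≤ Real.sqrt (T / (T - 1)) * Real.exp (S ^ 2 / (4 * α * T * (T - 1))) := by
    rw [hEdef, Real.exp_add]
    gcongr
    -- exp (1/(2T)) ≤ √(T/(T-1))
    have h1 : (1:ℝ) / (2 * T) = (1 / T) / 2 := by ring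
    rw [h1, Real.exp_half]
    apply Real.sqrt_le_sqrt
    -- exp (1/T) ≤ T/(T-1)
    have h := Real.add_one_le_exp (-(1 / T))
    have h3 : Real.exp (1 / T) * Real.exp (-(1 / T)) = 1 := by
      rw [← Real.exp_add]; norm_num
    have h2 : Real.exp (1 / T) * (1 - 1 / T) ≤ 1 := by
      nlinarith [mul_le_mul_of_nonneg_left h (Real.exp_pos (1 / T)).le]
    have hTT : (1 - 1 / T) * T = T - 1 := by field_simp
    rw [le_div_iff₀ hT1]
    have h4 := mul_le_mul_of_nonneg_right h2 hTpos.le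
    rw [mul_assoc, hTT] at h4
    linarith
  -- the two exponent inequalities
  have h21 : x2 ≤ x1 := by
    rw [hx1def, hx2def]
    gcongr <;> linarith
  have hP1 : (L + 1) * (1 / (α * T)) ≤ 1 / (2 * T) := by
    rw [mul_one_div, div_le_div_iff₀ ha (by linarith : (0:ℝ) < 2 * T)]
    linarith [mul_le_mul_of_nonneg_right (show 2 * (L + 1) ≤ α by linarith) hTpos.le]
  have key : 2 * (L + 1) * (T - 1) ≤ α * T := by
    linarith [mul_le_mul_of_nonneg_right (show 2 * (L + 1) ≤ α by linarith) hTpos.le]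
  have hP2 : (L + 1) * ((S / (α * T)) ^ 2 / 2) ≤ S ^ 2 / (4 * α * T * (T - 1)) := by
    calc (L + 1) * ((S / (α * T)) ^ 2 / 2)
        = S ^ 2 * ((L + 1) / ((α * T) ^ 2 * 2)) := by rw [div_pow]; ring
      _ ≤ S ^ 2 * (1 / (4 * α * T * (T - 1))) := by
          apply mul_le_mul_of_nonneg_left _ (sq_nonneg S)
          rw [div_le_div_iff₀ (by positivity) (by positivity)]
          linarith [mul_le_mul_of_nonneg_left key (by positivity : (0:ℝ) ≤ 2 * α * T)]
      _ = S ^ 2 / (4 * α * T * (T - 1)) := by rw [mul_one_div]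
  have h1E : (L + 1) * x1 ≤ E := by
    rw [hx1def, hEdef, mul_add]
    exact add_le_add hP1 hP2
  linarith [residual_step_aux L x1 x2 E hL0 h21 h1E, b1, b2, b3]
end

section
/- Let λ ≥ 0, G > 0, α ≥ 4λ/G + 2, and define ψ(x) = (λ/G)·exp(x/α) + exp(x/(4α)) - λ/G - 1/√(1-x). Then ψ(x) ≤ 0 for all x ∈ (0, 1/2]. -/
private lemma exp_upper (t : ℝ) (h0 : 0 ≤ t) (h1 : t ≤ 1/4) :
    Real.exp t ≤ 1 + 4/3 * t := by
  have key : Real.exp t * Real.exp (-t) = 1 := by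
    rw [← Real.exp_add]; simp
  have h2 : 1 - t ≤ Real.exp (-t) := by
    have := Real.add_one_le_exp (-t); linarith
  have hE : 0 < Real.exp t := Real.exp_pos t
  nlinarith [mul_le_mul_of_nonneg_left h2 hE.le]

/-- For `λ ≥ 0`, `G > 0`, `α ≥ 4λ/G + 2`, the function
`ψ(x) = (λ/G) exp(x/α) + exp(x/(4α)) - λ/G - 1/√(1-x)` satisfies `ψ(x) ≤ 0`
on `(0, 1/2]`. -/
theorem psi_nonpos (lam G α : ℝ) (hlam : 0 ≤ lam) (hG : 0 < G)
    (hα : 4 * lam / G + 2 ≤ α) (x : ℝ) (hx0 : 0 < x) (hx1 : x ≤ 1 / 2) :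
    lam / G * Real.exp (x / α) + Real.exp (x / (4 * α)) - lam / G
      - 1 / Real.sqrt (1 - x) ≤ 0 := by
  have hβ : 0 ≤ lam / G := div_nonneg hlam hG.le
  have hlG : 4 * lam ≤ (α - 2) * G := (div_le_iff₀ hG).mp (by linarith)
  have hα2 : (2:ℝ) ≤ α := by nlinarith [div_nonneg (mul_nonneg (by norm_num : (0:ℝ) ≤ 4) hlam) hG.le]
  have hαpos : (0:ℝ) < α := by linarith
  -- bounds on the exponents
  have ht0 : 0 ≤ x / α := div_nonneg hx0.le hαpos.le
  have ht1 : x / α ≤ x / 2 := by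
    apply div_le_div_of_nonneg_left hx0.le (by norm_num) hα2
  have hs0 : 0 ≤ x / (4 * α) := div_nonneg hx0.le (by positivity)
  have hs1 : x / (4 * α) ≤ x / 8 := by
    apply div_le_div_of_nonneg_left hx0.le (by norm_num) (by linarith)
  have hE1 : Real.exp (x / α) ≤ 1 + 4/3 * (x / α) :=
    exp_upper _ ht0 (by linarith)
  have hE2 : Real.exp (x / (4 * α)) ≤ 1 + 4/3 * (x / (4 * α)) :=
    exp_upper _ hs0 (by linarith)
  -- key product bound: (lam/G) * (x/α) ≤ x/4
  have hprod : lam / G * (x / α) ≤ x / 4 := by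
    rw [div_mul_div_comm, div_le_iff₀ (by positivity)]
    nlinarith
  -- sqrt bound : 1 + x/2 ≤ 1/√(1-x)
  have h1x : (0:ℝ) < 1 - x := by linarith
  have hsq : 0 < Real.sqrt (1 - x) := Real.sqrt_pos.mpr h1x
  have hsqle : Real.sqrt (1 - x) * (1 + x/2) ≤ 1 := by
    nlinarith [Real.sq_sqrt h1x.le, Real.sqrt_nonneg (1 - x), sq_nonneg (Real.sqrt (1-x) * (1 + x/2) - 1), sq_nonneg (Real.sqrt (1-x) - 1)]
  have h3 : 1 + x/2 ≤ 1 / Real.sqrt (1 - x) := by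
    rw [le_div_iff₀ hsq]; nlinarith
  -- combine
  have hβE : lam / G * Real.exp (x / α) ≤ lam / G * (1 + 4/3 * (x / α)) :=
    mul_le_mul_of_nonneg_left hE1 hβ
  nlinarith [hβE, hE2, h3, hprod, hs1]
end

section
/- Let V : ℕ × ℝ → ℝ be convex in its second argument and define x_t = (1/2)[V(t, S+1) - V(t, S-1)] where S_t = S_{t-1} - g_t with g_t ∈ [-1,1] and S_0 = 0. Then for all t ≥ 1: V(t, S_t) - V(t-1, S_{t-1}) ≤ -g_t·x_t + [V(t,S_{t-1}) - V(t-1,S_{t-1})] + (1/2)[V(t,S_{t-1}+1) + V(t,S_{t-1}-1) - 2V(t,S_{t-1})]. -/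
/-- Discrete Itô formula for convex potentials: with `x_t = (V(t,S_{t-1}+1) - V(t,S_{t-1}-1))/2`,
`S_t = S_{t-1} - g_t`, `g_t ∈ [-1,1]`, `S_0 = 0`, for all `t ≥ 1`:
`V(t,S_t) - V(t-1,S_{t-1}) ≤ -g_t x_t + ∇̄_t V(t,S_{t-1}) + (1/2) ∇̄_{SS} V(t,S_{t-1})`. -/
theorem discrete_ito (V : ℕ → ℝ → ℝ) (hconv : ∀ t, ConvexOn ℝ Set.univ (V t))
    (g S x : ℕ → ℝ) (hg : ∀ t, g t ∈ Set.Icc (-1 : ℝ) 1)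
    (hS0 : S 0 = 0) (hS : ∀ t, 1 ≤ t → S t = S (t - 1) - g t)
    (hx : ∀ t, 1 ≤ t → x t = (V t (S (t - 1) + 1) - V t (S (t - 1) - 1)) / 2) :
    ∀ t, 1 ≤ t →
      V t (S t) - V (t - 1) (S (t - 1)) ≤
        -(g t) * x t + (V t (S (t - 1)) - V (t - 1) (S (t - 1)))
          + (1 / 2) * (V t (S (t - 1) + 1) + V t (S (t - 1) - 1) - 2 * V t (S (t - 1))) := by
  intro t ht
  obtain ⟨hg1, hg2⟩ := hg t
  have ha : (0:ℝ) ≤ (1 + g t) / 2 := by linarith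
  have hb : (0:ℝ) ≤ (1 - g t) / 2 := by linarith
  have hab : (1 + g t) / 2 + (1 - g t) / 2 = 1 := by ring
  have key := (hconv t).2 (Set.mem_univ (S (t - 1) - 1)) (Set.mem_univ (S (t - 1) + 1))
    ha hb hab
  simp only [smul_eq_mul] at key
  have hst : (1 + g t) / 2 * (S (t - 1) - 1) + (1 - g t) / 2 * (S (t - 1) + 1)
      = S t := by rw [hS t ht]; ring
  rw [hst] at key
  rw [hx t ht]
  nlinarith [key]
end

section
/- For every integer d ≥ 3, define p, q ∈ Δ(d) by p₁ = 1/√(log d), q₁ = 1/(d√(log d)), and p_i = (1-p₁)/(d-1), q_i = (1-q₁)/(d-1) for 2 ≤ i ≤ d. Then TV(p,q) = (d-1)/(d√(log d)), KL(p‖q) ≥ √(log d) + log(1 - d/(d√(log d) - 1)), and KL(p‖q) ≤ √d; in particular TV(p,q)·KL(p‖q) ≤ 1. -/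
open Real

private lemma sum_ite_fin (d : ℕ) (f : Fin d → ℝ) (a b : ℝ)
    (h0 : ∀ i : Fin d, (i : ℕ) = 0 → f i = a)
    (h1 : ∀ i : Fin d, (i : ℕ) ≠ 0 → f i = b) (hd : 0 < d) :
    ∑ i, f i = a + ((d:ℝ) - 1) * b := by
  obtain ⟨n, rfl⟩ : ∃ n, d = n + 1 := ⟨d - 1, by omega⟩
  rw [Fin.sum_univ_succ, h0 0 (by simp)]
  have h : ∀ i : Fin n, f i.succ = b := fun i => h1 _ (by simp)
  simp only [h, Finset.sum_const, Finset.card_univ, Fintype.card_fin, nsmul_eq_mul]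
  push_cast; ring

private lemma log3_gt : 1 < Real.log 3 := by
  rw [show (1:ℝ) = Real.log (Real.exp 1) by rw [Real.log_exp]]
  have := Real.exp_one_lt_d9
  apply Real.log_lt_log (Real.exp_pos 1); linarith

private lemma log3_lt : Real.log 3 < 16/9 := by
  rw [Real.log_lt_iff_lt_exp (by norm_num)]
  have h : Real.exp (16/9) = Real.exp (8/9) * Real.exp (8/9) := by
    rw [← Real.exp_add]; norm_num
  nlinarith [Real.add_one_le_exp (8/9 : ℝ)]

private lemma log4_lt : Real.log 4 < 25/16 := by
  rw [Real.log_lt_iff_lt_exp (by norm_num)]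
  have h : Real.exp (25/16) = Real.exp (25/128) ^ 8 := by
    rw [← Real.exp_nat_mul]; norm_num
  have h2 : (1 + 25/128:ℝ) ≤ Real.exp (25/128) := by
    have := Real.add_one_le_exp (25/128 : ℝ); linarith
  have h3 : ((1 + 25/128:ℝ)) ^ 8 ≤ Real.exp (25/128) ^ 8 :=
    pow_le_pow_left₀ (by norm_num) h2 8
  rw [h]
  calc (4:ℝ) < (1+25/128)^8 := by norm_num
    _ ≤ _ := h3

private lemma log5_ge : 3/2 ≤ Real.log 5 := by
  rw [Real.le_log_iff_exp_le (by norm_num)]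
  have h1 : Real.exp 3 = Real.exp (3/2) ^ 2 := by
    rw [← Real.exp_nat_mul]; norm_num
  have h2 : Real.exp 3 = Real.exp 1 ^ 3 := by
    rw [← Real.exp_nat_mul]; norm_num
  have e1 : Real.exp 1 < 2.72 := by linarith [Real.exp_one_lt_d9]
  have p1 : (0:ℝ) < Real.exp 1 := Real.exp_pos 1
  have h4 : Real.exp 1 ^ 2 < 2.72 ^ 2 := by nlinarith
  have h3 : Real.exp 1 ^ 3 < 25 := by nlinarith
  nlinarith [Real.exp_pos (3/2 : ℝ)]

set_option maxHeartbeats 1600000 in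
/-- For `d ≥ 3`, with `p₁ = 1/√(log d)`, `q₁ = 1/(d√(log d))` and the remaining mass
spread uniformly, `TV(p,q) = (d-1)/(d√(log d))`,
`KL(p‖q) ≥ √(log d) + log(1 - d/(d√(log d) - 1))`, `KL(p‖q) ≤ √d`, and
`TV(p,q) · KL(p‖q) ≤ 1`. -/
theorem tv_kl_example (d : ℕ) (hd : 3 ≤ d) (p q : Fin d → ℝ)
    (hp : ∀ i : Fin d, p i = if (i : ℕ) = 0 then 1 / Real.sqrt (Real.log d)
      else (1 - 1 / Real.sqrt (Real.log d)) / ((d : ℝ) - 1))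
    (hq : ∀ i : Fin d, q i = if (i : ℕ) = 0 then 1 / ((d : ℝ) * Real.sqrt (Real.log d))
      else (1 - 1 / ((d : ℝ) * Real.sqrt (Real.log d))) / ((d : ℝ) - 1)) :
    (1 / 2) * ∑ i, |p i - q i| = ((d : ℝ) - 1) / ((d : ℝ) * Real.sqrt (Real.log d)) ∧
    Real.sqrt (Real.log d)
        + Real.log (1 - (d : ℝ) / ((d : ℝ) * Real.sqrt (Real.log d) - 1))
      ≤ ∑ i, p i * Real.log (p i / q i) ∧
    ∑ i, p i * Real.log (p i / q i) ≤ Real.sqrt d ∧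
    ((1 / 2) * ∑ i, |p i - q i|) * ∑ i, p i * Real.log (p i / q i) ≤ 1 := by
  have hd0 : 0 < d := by omega
  set D : ℝ := (d : ℝ) with hDdef
  have hD3 : (3:ℝ) ≤ D := by rw [hDdef]; exact_mod_cast hd
  have hD0 : (0:ℝ) < D := by linarith
  clear_value D
  have hL1 : 1 < Real.log D := by
    calc (1:ℝ) < Real.log 3 := log3_gt
      _ ≤ Real.log D := Real.log_le_log (by norm_num) hD3
  have hL0 : (0:ℝ) ≤ Real.log D := by linarith
  set s := Real.sqrt (Real.log D) with hsdef
  have hss : s * s = Real.log D := Real.mul_self_sqrt hL0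
  have hsnn : (0:ℝ) ≤ s := Real.sqrt_nonneg _
  have hsled : s ≤ Real.sqrt D := by
    rw [hsdef]
    apply Real.sqrt_le_sqrt
    have := Real.log_le_sub_one_of_pos hD0
    linarith
  clear_value s
  have hs1 : 1 < s := by nlinarith
  have hs0 : (0:ℝ) < s := by linarith
  have hDs1 : 1 < D * s := by nlinarith
  have hDs0 : (0:ℝ) < D * s := by linarith
  have hT0 : (0:ℝ) < D * s - 1 := by nlinarith
  have hD1 : (0:ℝ) < D - 1 := by linarith
  have hsne : s ≠ 0 := ne_of_gt hs0
  have hDne : D ≠ 0 := ne_of_gt hD0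
  have hD1ne : D - 1 ≠ 0 := ne_of_gt hD1
  have hDsne : D * s ≠ 0 := ne_of_gt hDs0
  have hTne : D * s - 1 ≠ 0 := ne_of_gt hT0
  set u := 1 - 1/s with hu
  set v := 1 - 1/(D*s) with hv
  have hinvs : 1/s < 1 := by rw [div_lt_one hs0]; exact hs1
  have hu0 : 0 < u := by rw [hu]; linarith
  have hu1 : u < 1 := by
    rw [hu]
    have : 0 < 1/s := by positivity
    linarith
  have hsDs : 1/(D*s) < 1/s := by
    apply one_div_lt_one_div_of_lt hs0; nlinarith
  have huv : u < v := by rw [hu, hv]; linarith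
  have hv0 : 0 < v := by linarith
  have hune : u ≠ 0 := ne_of_gt hu0
  have hvne : v ≠ 0 := ne_of_gt hv0
  set r := u / v with hr
  have hr0 : 0 < r := by rw [hr]; exact div_pos hu0 hv0
  have hr1 : r < 1 := by rw [hr]; exact (div_lt_one hv0).2 huv
  clear_value u v r
  have hlogr : Real.log r < 0 := Real.log_neg hr0 hr1
  -- TV sum
  have hTVsum : ∑ i, |p i - q i| = 2 * ((D-1)/(D*s)) := by
    have key : ∑ i, |p i - q i|
        = ((D-1)/(D*s)) + ((d:ℝ) - 1) * (((D-1)/(D*s))/(D-1)) := by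
      apply sum_ite_fin d _ _ _ ?_ ?_ hd0
      · intro i hi
        rw [hp i, hq i, if_pos hi, if_pos hi, abs_of_nonneg (by linarith)]
        field_simp
        try ring
      · intro i hi
        rw [hp i, hq i, if_neg hi, if_neg hi, abs_sub_comm,
          abs_of_nonneg (by rw [hu, hv, div_sub_div_same]
                            exact div_nonneg (by linarith) (by linarith))]
        rw [hu, hv, div_sub_div_same]
        rw [div_eq_div_iff hD1ne hD1ne]
        field_simp
        try ring
    rw [key, ← hDdef]
    field_simp
    try ring
  -- KL sum
  have hKLsum : ∑ i, p i * Real.log (p i / q i) = s + u * Real.log r := by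
    have key : ∑ i, p i * Real.log (p i / q i)
        = (1/s) * Real.log D + ((d:ℝ) - 1) * ((u/(D-1)) * Real.log r) := by
      apply sum_ite_fin d _ _ _ ?_ ?_ hd0
      · intro i hi
        rw [hp i, hq i, if_pos hi, if_pos hi]
        have h : (1/s) / (1/(D*s)) = D := by
          field_simp
        rw [h]
      · intro i hi
        rw [hp i, hq i, if_neg hi, if_neg hi]
        have h : (u/(D-1)) / (v/(D-1)) = r := by
          rw [hr]
          field_simp
        rw [h]
    rw [key, ← hDdef, ← hss]
    field_simp
    try ring
  -- basic inequality: u * log r ≥ -((D-1)/(D*s))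
  have h1r : 1 - 1/r ≤ Real.log r := by
    have h := Real.log_le_sub_one_of_pos (inv_pos.2 hr0)
    rw [Real.log_inv] at h
    rw [one_div]
    linarith
  have huv_eq : u - v = -((D-1)/(D*s)) := by
    rw [hu, hv]
    field_simp
    ring
  have hlb : -((D-1)/(D*s)) ≤ u * Real.log r := by
    have h2 := mul_le_mul_of_nonneg_left h1r (le_of_lt hu0)
    have h3 : u * (1 - 1/r) = u - v := by
      rw [hr, one_div_div]
      field_simp
    linarith
  have hreq : r = 1 - (D-1)/(D*s-1) := by
    have hvne' : 1 - 1/(D*s) ≠ 0 := by rw [← hv]; exact hvne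
    rw [hr, hu, hv]
    field_simp
    have hTne' : s * D - 1 ≠ 0 := by rw [mul_comm]; exact hTne
    rw [eq_sub_iff_add_eq, ← add_div, div_eq_one_iff_eq hTne']
    ring
  -- the key lower bound on KL
  have hmain : Real.log (1 - D/(D*s-1)) ≤ u * Real.log r := by
    have hcase : d = 3 ∨ d = 4 ∨ 5 ≤ d := by omega
    rcases hcase with h3 | h4 | h5
    · -- d = 3
      have hD : D = 3 := by rw [hDdef, h3]; norm_num
      have hlu : Real.log D < 16/9 := by rw [hD]; exact log3_lt
      have hs43 : s < 4/3 := by nlinarith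
      have hBpos : 0 < D/(D*s-1) - 1 := by
        have h' : D*s - 1 < D := by rw [hD]; nlinarith
        have h'' : 1 < D/(D*s-1) := (one_lt_div hT0).2 h'
        linarith
      have hBle : D/(D*s-1) - 1 ≤ 1/2 := by
        rw [sub_le_iff_le_add, div_le_iff₀ hT0, hD]; nlinarith
      have heq : (1 - D/(D*s-1)) = -(D/(D*s-1) - 1) := by ring
      rw [heq, Real.log_neg_eq_log]
      calc Real.log (D/(D*s-1) - 1) ≤ Real.log (1/2) :=
            Real.log_le_log hBpos hBle
        _ = -Real.log 2 := by rw [one_div, Real.log_inv]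
        _ ≤ -(2/3) := by have := Real.log_two_gt_d9; linarith
        _ ≤ -((D-1)/(D*s)) := by
            rw [neg_le_neg_iff, div_le_div_iff₀ hDs0 (by norm_num : (0:ℝ) < 3), hD]
            nlinarith
        _ ≤ u * Real.log r := hlb
    · -- d = 4
      have hD : D = 4 := by rw [hDdef, h4]; norm_num
      have hlu : Real.log D < 25/16 := by rw [hD]; exact log4_lt
      have hs54 : s < 5/4 := by nlinarith
      have hBpos : 0 < D/(D*s-1) - 1 := by
        have h' : D*s - 1 < D := by rw [hD]; nlinarith
        have h'' : 1 < D/(D*s-1) := (one_lt_div hT0).2 h'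
        linarith
      have hBle : D/(D*s-1) - 1 ≤ 1/3 := by
        rw [sub_le_iff_le_add, div_le_iff₀ hT0, hD]; nlinarith
      have heq : (1 - D/(D*s-1)) = -(D/(D*s-1) - 1) := by ring
      rw [heq, Real.log_neg_eq_log]
      calc Real.log (D/(D*s-1) - 1) ≤ Real.log (1/3) :=
            Real.log_le_log hBpos hBle
        _ = -Real.log 3 := by rw [one_div, Real.log_inv]
        _ ≤ -1 := by linarith [log3_gt]
        _ ≤ -((D-1)/(D*s)) := by
            rw [neg_le_neg_iff, div_le_one hDs0, hD]; nlinarith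
        _ ≤ u * Real.log r := hlb
    · -- 5 ≤ d
      have hD5 : (5:ℝ) ≤ D := by rw [hDdef]; exact_mod_cast h5
      have hlog5 : 3/2 ≤ Real.log D := by
        calc (3/2:ℝ) ≤ Real.log 5 := log5_ge
          _ ≤ Real.log D := Real.log_le_log (by norm_num) hD5
      have hinvD : 1/D ≤ 1/5 := one_div_le_one_div_of_le (by norm_num) hD5
      have hsd : 1 + 1/D < s := by nlinarith
      have hDt : D < D*s - 1 := by
        have h' : D * (1/D) = 1 := by field_simp
        nlinarith
      have hA0 : 0 < 1 - D/(D*s-1) := by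
        have h' : D/(D*s-1) < 1 := (div_lt_one hT0).2 hDt
        linarith
      have hAr : 1 - D/(D*s-1) ≤ r := by
        rw [hreq]
        have h' : (D-1)/(D*s-1) ≤ D/(D*s-1) := by
          rw [div_le_div_iff₀ hT0 hT0]; nlinarith
        linarith
      calc Real.log (1 - D/(D*s-1)) ≤ Real.log r := Real.log_le_log hA0 hAr
        _ ≤ u * Real.log r := by nlinarith
  -- upper bound facts
  have hKLle : s + u * Real.log r ≤ s := by nlinarith
  refine ⟨?_, ?_, ?_, ?_⟩
  · rw [hTVsum]; ring
  · rw [hKLsum]; linarith [hmain]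
  · rw [hKLsum]; linarith
  · rw [hTVsum, hKLsum]
    have hTVnn : 0 ≤ (D-1)/(D*s) := div_nonneg (by linarith) (by linarith)
    calc (1/2 * (2 * ((D-1)/(D*s)))) * (s + u * Real.log r)
        = ((D-1)/(D*s)) * (s + u * Real.log r) := by ring
      _ ≤ ((D-1)/(D*s)) * s := mul_le_mul_of_nonneg_left hKLle hTVnn
      _ = (D-1)/D := by field_simp
      _ ≤ 1 := by rw [div_le_one hD0]; linarith
end

section
/- Let w, w' ∈ ℝ₊^d, and define a = w + (1/d)·max{0, 1 - ‖w‖₁}·𝟙, a' = w' + (1/d)·max{0, 1 - ‖w'‖₁}·𝟙, A = max{‖w‖₁, 1}, A' = max{‖w'‖₁, 1}, and x = a/A, x' = a'/A'. Then ‖x - x'‖₁ ≤ 4‖w - w'‖₁. -/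
/-- Lipschitz property of the modified projection onto the simplex:
with `a = w + (1/d) max{0, 1 - ‖w‖₁} 𝟙`, `A = max{‖w‖₁, 1}`, `x = a/A` (and likewise
for `w'`), we have `‖x - x'‖₁ ≤ 4 ‖w - w'‖₁` for nonnegative `w, w'`. -/
theorem simplex_projection_lipschitz (d : ℕ) (hd : 0 < d)
    (w w' a a' x x' : Fin d → ℝ)
    (hw : ∀ i, 0 ≤ w i) (hw' : ∀ i, 0 ≤ w' i)
    (ha : ∀ i, a i = w i + (1 / (d : ℝ)) * max 0 (1 - ∑ j, |w j|))
    (ha' : ∀ i, a' i = w' i + (1 / (d : ℝ)) * max 0 (1 - ∑ j, |w' j|))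
    (hx : ∀ i, x i = a i / max (∑ j, |w j|) 1)
    (hx' : ∀ i, x' i = a' i / max (∑ j, |w' j|) 1) :
    ∑ i, |x i - x' i| ≤ 4 * ∑ i, |w i - w' i| := by
  set S := ∑ j, |w j| with hS
  set S' := ∑ j, |w' j| with hS'
  set D := ∑ i, |w i - w' i| with hD
  have hD0 : 0 ≤ D := Finset.sum_nonneg fun i _ => abs_nonneg _
  have hdpos : (0:ℝ) < (d:ℝ) := by exact_mod_cast hd
  have hSS' : |S - S'| ≤ D := by
    have h1 : S - S' = ∑ j, (|w j| - |w' j|) := by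
      rw [hS, hS', ← Finset.sum_sub_distrib]
    rw [h1]
    refine (Finset.abs_sum_le_sum_abs _ _).trans ?_
    exact Finset.sum_le_sum fun i _ => abs_abs_sub_abs_le_abs_sub _ _
  set A := max S 1 with hA
  set A' := max S' 1 with hA'
  have hA1 : (1:ℝ) ≤ A := le_max_right _ _
  have hA'1 : (1:ℝ) ≤ A' := le_max_right _ _
  have hApos : (0:ℝ) < A := lt_of_lt_of_le one_pos hA1
  have hA'pos : (0:ℝ) < A' := lt_of_lt_of_le one_pos hA'1
  have hAA' : |A - A'| ≤ D := (abs_max_sub_max_le_abs S S' 1).trans hSS'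
  set m := max 0 (1 - S) with hm
  set m' := max 0 (1 - S') with hm'
  have hmm' : |m - m'| ≤ D := by
    have h1 : |m - m'| ≤ |(1 - S) - (1 - S')| := by
      rw [hm, hm', max_comm 0 (1 - S), max_comm 0 (1 - S')]
      exact abs_max_sub_max_le_abs _ _ _
    refine h1.trans ?_
    have : (1 - S) - (1 - S') = -(S - S') := by ring
    rw [this, abs_neg]; exact hSS'
  -- sum of a' equals A'
  have hSw' : ∑ i, w' i = S' := by
    rw [hS']; exact Finset.sum_congr rfl fun i _ => (abs_of_nonneg (hw' i)).symm
  have hsuma' : ∑ i, a' i = A' := by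
    have : ∑ i, a' i = ∑ i, (w' i + (1 / (d:ℝ)) * m') := by
      exact Finset.sum_congr rfl fun i _ => ha' i
    rw [this, Finset.sum_add_distrib, hSw', Finset.sum_const, Finset.card_fin, nsmul_eq_mul]
    have hdd : (d:ℝ) * ((1 / (d:ℝ)) * m') = m' := by field_simp
    rw [hdd, hA', hm']
    rcases le_total S' 1 with h | h
    · rw [max_eq_right (by linarith), max_eq_right (by linarith)]; ring
    · rw [max_eq_left (by linarith), max_eq_left (by linarith)]; ring
  have ha'nn : ∀ i, 0 ≤ a' i := by
    intro i; rw [ha' i]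
    have : 0 ≤ (1 / (d:ℝ)) * m' := by positivity
    linarith [hw' i]
  -- pointwise bound
  have key : ∀ i, |x i - x' i| ≤ |a i - a' i| + a' i * |1/A - 1/A'| := by
    intro i
    rw [hx i, hx' i]
    have hsplit : a i / A - a' i / A' = (a i - a' i)/A + a' i * (1/A - 1/A') := by
      field_simp; ring
    rw [hsplit]
    refine (abs_add_le _ _).trans ?_
    have h1 : |(a i - a' i)/A| ≤ |a i - a' i| := by
      rw [abs_div, abs_of_pos hApos]
      exact div_le_self (abs_nonneg _) hA1
    have h2 : |a' i * (1/A - 1/A')| = a' i * |1/A - 1/A'| := by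
      rw [abs_mul, abs_of_nonneg (ha'nn i)]
    rw [h2]; exact add_le_add h1 le_rfl
  have hsum : ∑ i, |x i - x' i| ≤ (∑ i, |a i - a' i|) + A' * |1/A - 1/A'| := by
    calc ∑ i, |x i - x' i| ≤ ∑ i, (|a i - a' i| + a' i * |1/A - 1/A'|) :=
          Finset.sum_le_sum fun i _ => key i
      _ = (∑ i, |a i - a' i|) + (∑ i, a' i) * |1/A - 1/A'| := by
          rw [Finset.sum_add_distrib, ← Finset.sum_mul]
      _ = (∑ i, |a i - a' i|) + A' * |1/A - 1/A'| := by rw [hsuma']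
  have haa' : ∑ i, |a i - a' i| ≤ 2 * D := by
    have hpt : ∀ i, |a i - a' i| ≤ |w i - w' i| + (1 / (d:ℝ)) * |m - m'| := by
      intro i
      rw [ha i, ha' i]
      have : w i + (1 / (d:ℝ)) * m - (w' i + (1 / (d:ℝ)) * m') =
          (w i - w' i) + (1 / (d:ℝ)) * (m - m') := by ring
      rw [this]
      refine (abs_add_le _ _).trans ?_
      rw [abs_mul, abs_of_pos (by positivity : (0:ℝ) < 1 / (d:ℝ))]
    calc ∑ i, |a i - a' i| ≤ ∑ i, (|w i - w' i| + (1 / (d:ℝ)) * |m - m'|) :=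
          Finset.sum_le_sum fun i _ => hpt i
      _ = D + (d:ℝ) * ((1 / (d:ℝ)) * |m - m'|) := by
          rw [Finset.sum_add_distrib, Finset.sum_const, Finset.card_fin, nsmul_eq_mul, hD]
      _ = D + |m - m'| := by field_simp
      _ ≤ 2 * D := by linarith [hmm']
  have hinv : A' * |1/A - 1/A'| ≤ D := by
    have h1 : 1/A - 1/A' = (A' - A) / (A * A') := by field_simp
    have h2 : A' * |1/A - 1/A'| = |A' - A| / A := by
      rw [h1, abs_div, abs_of_pos (mul_pos hApos hA'pos)]
      field_simp
    rw [h2]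
    calc |A' - A| / A ≤ |A' - A| := div_le_self (abs_nonneg _) hA1
      _ = |A - A'| := abs_sub_comm _ _
      _ ≤ D := hAA'
  calc ∑ i, |x i - x' i| ≤ (∑ i, |a i - a' i|) + A' * |1/A - 1/A'| := hsum
    _ ≤ 2 * D + D := add_le_add haa' hinv
    _ ≤ 4 * D := by linarith
end

section
/- Let g ∈ [-G,G]^d, w ∈ ℝ₊^d, u ∈ Δ(d), and define x ∈ Δ(d) by x = w + (1/d)(1-‖w‖₁)𝟙 if ‖w‖₁ ≤ 1 and x = w/‖w‖₁ if ‖w‖₁ > 1. Define z ∈ ℝ^d by z = g - ‖g‖_∞·𝟙 if ‖w‖₁ < 1, z = g if ‖w‖₁ = 1, and z = g + ‖g‖_∞·𝟙 if ‖w‖₁ > 1. Then ⟨g, x - u⟩ ≤ ⟨z, w - u⟩. -/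
/-- Surrogate-loss inequality for the OLO-to-LEA reduction: with `x` the modified
projection of the nonnegative weight vector `w` onto the simplex and `z` the surrogate
loss built from `g` and `‖g‖_∞`, `⟨g, x - u⟩ ≤ ⟨z, w - u⟩` for any `u` in the simplex. -/
theorem surrogate_loss_ineq (d : ℕ) (hne : (Finset.univ : Finset (Fin d)).Nonempty)
    (G : ℝ) (g w u x z : Fin d → ℝ)
    (hg : ∀ i, |g i| ≤ G) (hw : ∀ i, 0 ≤ w i)
    (hu : (∀ i, 0 ≤ u i) ∧ ∑ i, u i = 1)
    (hx : ∀ i, x i = if ∑ j, w j ≤ 1 then w i + (1 / (d : ℝ)) * (1 - ∑ j, w j)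
      else w i / ∑ j, w j)
    (hz : ∀ i, z i =
      if ∑ j, w j < 1 then g i - Finset.univ.sup' hne (fun k => |g k|)
      else if ∑ j, w j = 1 then g i
      else g i + Finset.univ.sup' hne (fun k => |g k|)) :
    ∑ i, g i * (x i - u i) ≤ ∑ i, z i * (w i - u i) := by
  obtain ⟨hu0, hu1⟩ := hu
  set S := ∑ j, w j with hS
  set M := Finset.univ.sup' hne (fun k => |g k|) with hMdef
  have hM : ∀ i, |g i| ≤ M := fun i => Finset.le_sup' (fun k => |g k|) (Finset.mem_univ i)
  obtain ⟨i0, _⟩ := hne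
  have hM0 : (0:ℝ) ≤ M := (abs_nonneg _).trans (hM i0)
  have hd : (0:ℝ) < d := by
    have : 0 < d := i0.pos
    exact_mod_cast this
  rcases lt_trichotomy S 1 with h | h | h
  · -- S < 1
    have hx' : ∀ i, x i = w i + (1 / (d:ℝ)) * (1 - S) := fun i => by
      rw [hx i, if_pos h.le]
    have hz' : ∀ i, z i = g i - M := fun i => by rw [hz i, if_pos h]
    have L : ∑ i, g i * (x i - u i)
        = (∑ i, g i * (w i - u i)) + (∑ i, g i) * ((1 / (d:ℝ)) * (1 - S)) := by
      rw [Finset.sum_mul, ← Finset.sum_add_distrib]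
      exact Finset.sum_congr rfl fun i _ => by rw [hx' i]; ring
    have R : ∑ i, z i * (w i - u i)
        = (∑ i, g i * (w i - u i)) - M * (S - 1) := by
      have e : ∑ i, z i * (w i - u i)
          = ∑ i, (g i * (w i - u i) - M * (w i - u i)) :=
        Finset.sum_congr rfl fun i _ => by rw [hz' i]; ring
      rw [e, Finset.sum_sub_distrib, ← Finset.mul_sum, Finset.sum_sub_distrib, hu1, ← hS]
    have hT : ∑ i, g i ≤ (d:ℝ) * M := by
      calc ∑ i, g i ≤ ∑ _i : Fin d, M :=
            Finset.sum_le_sum fun i _ => (le_abs_self _).trans (hM i)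
        _ = (d:ℝ) * M := by
            simp [Finset.sum_const, Finset.card_univ, nsmul_eq_mul]
    have key : (∑ i, g i) * ((1 / (d:ℝ)) * (1 - S)) ≤ M * (1 - S) := by
      have h1 : (∑ i, g i) * (1 - S) ≤ ((d:ℝ) * M) * (1 - S) :=
        mul_le_mul_of_nonneg_right hT (by linarith)
      have hd0 : (d:ℝ) ≠ 0 := ne_of_gt hd
      calc (∑ i, g i) * ((1 / (d:ℝ)) * (1 - S))
          = ((∑ i, g i) * (1 - S)) / d := by ring
        _ ≤ (((d:ℝ) * M) * (1 - S)) / d := by gcongr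
        _ = M * (1 - S) := by field_simp
    rw [L, R]; linarith
  · -- S = 1
    have hx' : ∀ i, x i = w i := fun i => by rw [hx i, if_pos h.le, h]; ring
    have hz' : ∀ i, z i = g i := fun i => by
      rw [hz i, if_neg (by simp [h]), if_pos h]
    exact le_of_eq (Finset.sum_congr rfl fun i _ => by rw [hx' i, hz' i])
  · -- S > 1
    have hS0 : (0:ℝ) < S := lt_trans one_pos h
    have hx' : ∀ i, x i = w i / S := fun i => by rw [hx i, if_neg (not_le.mpr h)]
    have hz' : ∀ i, z i = g i + M := fun i => by
      rw [hz i, if_neg (not_lt.mpr h.le), if_neg (ne_of_gt h)]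
    have L : ∑ i, g i * (x i - u i)
        = (∑ i, g i * w i) / S - ∑ i, g i * u i := by
      rw [Finset.sum_div, ← Finset.sum_sub_distrib]
      exact Finset.sum_congr rfl fun i _ => by rw [hx' i]; ring
    have R : ∑ i, z i * (w i - u i)
        = (∑ i, g i * w i) - (∑ i, g i * u i) + M * (S - 1) := by
      have e : ∑ i, z i * (w i - u i)
          = ∑ i, ((g i * w i - g i * u i) + M * (w i - u i)) :=
        Finset.sum_congr rfl fun i _ => by rw [hz' i]; ring
      rw [e, Finset.sum_add_distrib, Finset.sum_sub_distrib, ← Finset.mul_sum,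
        Finset.sum_sub_distrib, hu1, ← hS]
    have hP : -(M * S) ≤ ∑ i, g i * w i := by
      have e : ∑ i, (-M) * w i = -(M * S) := by rw [← Finset.mul_sum, ← hS]; ring
      calc -(M * S) = ∑ i, (-M) * w i := e.symm
        _ ≤ ∑ i, g i * w i :=
          Finset.sum_le_sum fun i _ =>
            mul_le_mul_of_nonneg_right (neg_le_of_abs_le (hM i)) (hw i)
    rw [L, R]
    have key : (∑ i, g i * w i) / S ≤ (∑ i, g i * w i) + M * (S - 1) := by
      rw [div_le_iff₀ hS0]
      nlinarith [mul_nonneg (sub_nonneg.mpr h.le)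
        (by linarith : (0:ℝ) ≤ (∑ i, g i * w i) + M * S)]
    linarith
end
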